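/- Define L(g) = N[(1−τ)(mL_g+αF) + (mg+F)mN]/(α+(Nm−α)τ) and q(g) = (1−τ)(L(g)+L_g−αg)/((Nm+α(1−τ))(L(g)+L_g)). Assume Nm > α, τ ∈ (0,1), F > 0, L_g ≥ 0. Then dq/dg < 0 for g ≥ 0: government purchase crowds out private consumption per capita. -/

import Mathlib

/-- Government purchase crowds out private consumption per capita. -/
theorem stmt_12 (α N m F Lg τ : ℝ) (hα : 0 < α) (hN : 0 < N) (hm : 0 < m)
    (hF : 0 < F) (hLg : 0 ≤ Lg) (hτ0 : 0 < τ) (hτ1 : τ < 1) (hNm : N * m > α) :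
    ∀ g : ℝ, 0 ≤ g →
      deriv (fun g : ℝ =>
        let L := N * ((1 - τ) * (m * Lg + α * F) + (m * g + F) * m * N) / (α + (N * m - α) * τ)
        (1 - τ) * (L + Lg - α * g) / ((N * m + α * (1 - τ)) * (L + Lg))) g < 0 := by
  intro g hg
  have hD0 : 0 < α + (N * m - α) * τ := by nlinarith
  set D : ℝ := α + (N * m - α) * τ with hD
  set C : ℝ := N * m + α * (1 - τ) with hC
  have hC0 : 0 < C := by rw [hC]; nlinarith
  set B : ℝ := N * m * m * N / D with hB
  set A : ℝ := (N * ((1 - τ) * (m * Lg + α * F)) + N * (F * m * N)) / D + Lg with hA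
  have hB0 : 0 < B := by
    rw [hB]; apply div_pos _ hD0; positivity
  have hA0 : 0 < A := by
    rw [hA]
    have t1 : 0 < 1 - τ := by linarith
    have p1 : 0 < N * ((1 - τ) * (m * Lg + α * F)) :=
      mul_pos hN (mul_pos t1 (add_pos_of_nonneg_of_pos (mul_nonneg hm.le hLg) (mul_pos hα hF)))
    have p2 : 0 < N * (F * m * N) := mul_pos hN (mul_pos (mul_pos hF hm) hN)
    have h1 : 0 < (N * ((1 - τ) * (m * Lg + α * F)) + N * (F * m * N)) := by linarith
    have := div_pos h1 hD0
    linarith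
  have hu : 0 < A + B * g := by nlinarith
  have hfun : (fun g : ℝ =>
      let L := N * ((1 - τ) * (m * Lg + α * F) + (m * g + F) * m * N) / (α + (N * m - α) * τ)
      (1 - τ) * (L + Lg - α * g) / ((N * m + α * (1 - τ)) * (L + Lg)))
      = fun x : ℝ => (1 - τ) * (A + B * x - α * x) / (C * (A + B * x)) := by
    funext x
    show (1 - τ) * (N * ((1 - τ) * (m * Lg + α * F) + (m * x + F) * m * N) / D + Lg - α * x) /
        (C * (N * ((1 - τ) * (m * Lg + α * F) + (m * x + F) * m * N) / D + Lg))
      = (1 - τ) * (A + B * x - α * x) / (C * (A + B * x))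
    rw [hA, hB]
    ring
  rw [hfun]
  have ht : HasDerivAt (fun x : ℝ => (1 - τ) * (A + B * x - α * x)) ((1 - τ) * (B - α)) g := by
    have h := (((hasDerivAt_const g A).add ((hasDerivAt_id g).const_mul B)).sub
      ((hasDerivAt_id g).const_mul α)).const_mul (1 - τ)
    simpa using h
  have hb : HasDerivAt (fun x : ℝ => C * (A + B * x)) (C * B) g := by
    have h := ((hasDerivAt_const g A).add ((hasDerivAt_id g).const_mul B)).const_mul C
    simpa using h
  have hne : C * (A + B * g) ≠ 0 := by positivity
  have hdiv : HasDerivAt (fun x : ℝ => (1 - τ) * (A + B * x - α * x) / (C * (A + B * x)))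
      (((1 - τ) * (B - α) * (C * (A + B * g)) - (1 - τ) * (A + B * g - α * g) * (C * B)) /
        (C * (A + B * g)) ^ 2) g := ht.div hb hne
  rw [hdiv.deriv]
  apply div_neg_of_neg_of_pos
  · have hnum : (1 - τ) * (B - α) * (C * (A + B * g)) -
        (1 - τ) * (A + B * g - α * g) * (C * B) = -((1 - τ) * C * α * A) := by ring
    rw [hnum]
    have h1τ : 0 < 1 - τ := by linarith
    have : 0 < (1 - τ) * C * α * A := by positivity
    linarith
  · positivity
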